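/- For b ∈ N^{n-1} the divisor D(b) = ∑_{i=1}^{n-1} b_i D(i) on the toric resolution X has a convex support function ψ_{D(b)}; consequently O(D(b)) is generated by its global sections and H^i(X, O(D(b))) = 0 for all i > 0. -/

import Mathlib

open Finset

/-- Coefficient `a_k` of `D_k` in `D(b) = ∑_{i=1}^{n-1} b_i D(i)`. -/
def acoef (n : ℕ) (b : ℕ → ℕ) (kk : ℕ) : ℤ :=
  ∑ j ∈ Icc (n + 1 - kk) (n - 1), ((j : ℤ) + (kk : ℤ) - (n : ℤ)) * (b j : ℤ)

/-- Lattice points of the sections of `O(D(b))` over the chart `X_c` (cone with rays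
`v_{c-1}, v_c`), for `1 ≤ c ≤ n`. -/
def Esec (n : ℕ) (b : ℕ → ℕ) (c : ℕ) : Set (ℤ × ℤ) :=
  {u | 0 ≤ u.1 + ((c : ℤ) - 1) * u.2 + acoef n b (c - 1)
     ∧ 0 ≤ u.1 + (c : ℤ) * u.2 + acoef n b c}

/-- Lattice points of the sections of `O(D(b))` over `X_c ∩ X_{c'}`: for adjacent charts
the intersection is the ray `v_c` (resp. `v_{c'}`); non-adjacent charts meet in the
dense torus, giving all of `ℤ²`. -/
def Epair (n : ℕ) (b : ℕ → ℕ) (c c' : ℕ) : Set (ℤ × ℤ) :=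
  if c' = c + 1 then {u | 0 ≤ u.1 + (c : ℤ) * u.2 + acoef n b c}
  else if c = c' + 1 then {u | 0 ≤ u.1 + (c' : ℤ) * u.2 + acoef n b c'}
  else Set.univ

/-- The cone `σ_{i+1}` of the fan, spanned by `v_i = (1,i)` and `v_{i+1} = (1,i+1)`. -/
def fanCone (i : ℕ) : Set (ℝ × ℝ) :=
  {w | (i : ℝ) * w.1 ≤ w.2 ∧ w.2 ≤ ((i : ℝ) + 1) * w.1}

lemma seq_ge {F : ℕ → ℤ} {c : ℤ} {d : ℕ} :
    ∀ e, d ≤ e → (∀ k, d ≤ k → k + 1 ≤ e → c ≤ F (k+1) - F k) →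
    F d + ((e:ℤ) - d) * c ≤ F e := by
  intro e
  induction e with
  | zero => intro h _; interval_cases d; simp
  | succ m ih =>
    intro hde hstep
    rcases Nat.lt_or_ge d (m+1) with h | h
    · have hdm : d ≤ m := Nat.lt_succ_iff.mp h
      have h1 := ih hdm (fun k hk hk' => hstep k hk (by omega))
      have h2 := hstep m hdm le_rfl
      push_cast
      push_cast at h1
      linarith
    · have : d = m + 1 := le_antisymm hde h
      subst this; simp

lemma seq_le {F : ℕ → ℤ} {c : ℤ} {d : ℕ} :
    ∀ e, d ≤ e → (∀ k, d ≤ k → k + 1 ≤ e → F (k+1) - F k ≤ c) →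
    F e ≤ F d + ((e:ℤ) - d) * c := by
  intro e he hstep
  have := seq_ge (F := fun k => -F k) (c := -c) (d := d) e he
    (fun k hk hk' => by have := hstep k hk hk'; simp; linarith)
  push_cast at this ⊢
  simp at this
  linarith

lemma acoef_step {n : ℕ} (b : ℕ → ℕ) {k : ℕ} (hk : k + 1 ≤ n) :
    acoef n b (k+1) - acoef n b k = ∑ j ∈ Icc (n-k) (n-1), (b j : ℤ) := by
  rcases Nat.eq_zero_or_pos k with rfl | hk0
  · have h1 : n + 1 - 1 = n := by omega
    have h2 : Icc n (n-1) = ∅ := Icc_eq_empty (by omega)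
    have h3 : Icc (n+1) (n-1) = ∅ := Icc_eq_empty (by omega)
    simp [acoef, h1, h2, h3]
  · have hb : n + 1 - (k+1) = n - k := by omega
    have hb2 : n + 1 - k = (n - k) + 1 := by omega
    have hle : n - k ≤ n - 1 := by omega
    have hins : Icc (n - k) (n-1) = insert (n-k) (Icc ((n-k)+1) (n-1)) := by
      rw [Finset.Icc_add_one_left_eq_Ioc, Finset.Ioc_insert_left hle]
    unfold acoef
    rw [hb, hb2, hins, Finset.sum_insert (by simp), Finset.sum_insert (by simp)]
    have hcast : ((n - k : ℕ) : ℤ) = (n : ℤ) - k := by omega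
    rw [hcast]
    have : ∀ T : Finset ℕ, (∑ j ∈ T, ((j:ℤ) + (k+1:ℕ) - n) * b j)
        - ∑ j ∈ T, ((j:ℤ) + k - n) * b j = ∑ j ∈ T, (b j : ℤ) := by
      intro T
      rw [← Finset.sum_sub_distrib]
      apply Finset.sum_congr rfl
      intro j hj; push_cast; ring
    have h4 := this (Icc ((n-k)+1) (n-1))
    push_cast at h4 ⊢
    linarith

lemma sco_mono {n : ℕ} (b : ℕ → ℕ) {k l : ℕ} (hkl : k ≤ l) (hl : l + 1 ≤ n) :
    acoef n b (k+1) - acoef n b k ≤ acoef n b (l+1) - acoef n b l := by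
  rw [acoef_step b (by omega), acoef_step b hl]
  apply Finset.sum_le_sum_of_subset_of_nonneg
  · apply Finset.Icc_subset_Icc_left; omega
  · intros; positivity

/-- tangent line lemma: convex `acoef` lies above its tangent at `m`. -/
lemma acoef_tangent {n : ℕ} (b : ℕ → ℕ) {m j : ℕ} (hm : m + 1 ≤ n) (hj : j ≤ n) :
    acoef n b m + ((j:ℤ) - m) * (acoef n b (m+1) - acoef n b m) ≤ acoef n b j := by
  rcases le_or_gt m j with h | h
  · exact seq_ge j h (fun k hk hk' => sco_mono b hk (le_trans hk' hj))
  · have := seq_le (F := fun k => acoef n b k) (c := acoef n b (m+1) - acoef n b m)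
      (d := j) m h.le (fun k hk hk' => sco_mono b (by omega) hm)
    nlinarith [this]

lemma part2 (n : ℕ) (hn : 1 ≤ n) (b : ℕ → ℕ) :
    ∀ c : ℕ, 1 ≤ c → c ≤ n → ∀ u ∈ Esec n b c,
      ∃ g w : ℤ × ℤ,
        (∀ j : ℕ, j ≤ n → 0 ≤ g.1 + (j : ℤ) * g.2 + acoef n b j) ∧
        (0 ≤ w.1 + ((c : ℤ) - 1) * w.2 ∧ 0 ≤ w.1 + (c : ℤ) * w.2) ∧
        u = g + w := by
  intro c hc1 hcn u hu
  set m := c - 1 with hm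
  have hmc : m + 1 = c := by omega
  have hmn : m + 1 ≤ n := by omega
  set s : ℤ := acoef n b c - acoef n b m with hs
  refine ⟨(-(acoef n b m) + (m:ℤ) * s, -s), u - (-(acoef n b m) + (m:ℤ) * s, -s),
    ?_, ?_, by simp⟩
  · intro j hj
    have ht := acoef_tangent b (m := m) (j := j) hmn hj
    rw [hmc, ← hs] at ht
    simp only
    ring_nf at ht ⊢
    linarith
  · obtain ⟨h1, h2⟩ := hu
    have hcm : ((c : ℤ) - 1) = (m : ℤ) := by omega
    constructor
    · simp only [Prod.fst_sub, Prod.snd_sub]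
      rw [hcm] at h1 ⊢
      ring_nf
      ring_nf at h1
      linarith
    · simp only [Prod.fst_sub, Prod.snd_sub]
      have : (c : ℤ) = (m : ℤ) + 1 := by omega
      rw [this] at h2 ⊢
      ring_nf
      ring_nf at h2
      linarith

section PartOne
variable (n : ℕ) (b : ℕ → ℕ)

noncomputable def Afn (k : ℕ) : ℝ := (acoef n b k : ℝ)
noncomputable def Sfn (k : ℕ) : ℝ := Afn n b (k+1) - Afn n b k
noncomputable def Lfn (i : ℕ) (w : ℝ × ℝ) : ℝ :=
  (-(Afn n b i) + (i : ℝ) * Sfn n b i) * w.1 + (-(Sfn n b i)) * w.2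

lemma tangentR {m j : ℕ} (hm : m + 1 ≤ n) (hj : j ≤ n) :
    Afn n b m + ((j : ℝ) - m) * Sfn n b m ≤ Afn n b j := by
  have := acoef_tangent b hm hj
  unfold Afn Sfn Afn
  push_cast
  exact_mod_cast this

lemma sco_monoR {k l : ℕ} (hkl : k ≤ l) (hl : l + 1 ≤ n) :
    Sfn n b k ≤ Sfn n b l := by
  have := sco_mono b hkl hl
  unfold Sfn Afn
  exact_mod_cast this

noncomputable def psiFn (hn : 1 ≤ n) (w : ℝ × ℝ) : ℝ :=
  (Finset.range n).inf' (by simp; omega) (fun i => Lfn n b i w)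

lemma lfn_le_cone {i : ℕ} (hi : i < n) {w : ℝ × ℝ} (hw : w ∈ fanCone i) :
    ∀ i' < n, Lfn n b i w ≤ Lfn n b i' w := by
  obtain ⟨hw1, hw2⟩ := hw
  have hwpos : 0 ≤ w.1 := by nlinarith
  intro i' hi'
  rcases le_or_gt i i' with h | h
  · have hS : Sfn n b i ≤ Sfn n b i' := sco_monoR n b h hi'
    have ht : Afn n b i' + (((i+1 : ℕ) : ℝ) - i') * Sfn n b i' ≤ Afn n b (i+1) :=
      tangentR n b hi' (by omega)
    have hA : Afn n b (i+1) = Afn n b i + Sfn n b i := by unfold Sfn; ring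
    rw [hA] at ht
    push_cast at ht
    unfold Lfn
    nlinarith [mul_nonneg hwpos (sub_nonneg.mpr hS),
      mul_le_mul_of_nonneg_left hw2 (sub_nonneg.mpr hS)]
  · have hS : Sfn n b i' ≤ Sfn n b i := sco_monoR n b h.le hi
    have ht : Afn n b i' + ((i : ℝ) - i') * Sfn n b i' ≤ Afn n b i :=
      tangentR n b (by omega) (by omega)
    unfold Lfn
    nlinarith [mul_nonneg hwpos (sub_nonneg.mpr hS),
      mul_le_mul_of_nonneg_left hw1 (sub_nonneg.mpr hS)]

lemma part1 (hn : 1 ≤ n) :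
    ∃ ψ : ℝ × ℝ → ℝ,
      (∀ i : ℕ, i < n → ∃ u : ℝ × ℝ, ∀ w ∈ fanCone i, ψ w = u.1 * w.1 + u.2 * w.2) ∧
      (∀ j : ℕ, j ≤ n → ψ (1, (j : ℝ)) = -(acoef n b j : ℝ)) ∧
      ConcaveOn ℝ {w : ℝ × ℝ | 0 ≤ w.2 ∧ w.2 ≤ (n : ℝ) * w.1} ψ := by
  refine ⟨psiFn n b hn, ?_, ?_, ?_⟩
  · intro i hi
    refine ⟨(-(Afn n b i) + (i : ℝ) * Sfn n b i, -(Sfn n b i)), ?_⟩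
    intro w hw
    have h1 : psiFn n b hn w ≤ Lfn n b i w :=
      Finset.inf'_le _ (Finset.mem_range.mpr hi)
    have h2 : Lfn n b i w ≤ psiFn n b hn w := by
      apply Finset.le_inf'
      intro i' hi'
      exact lfn_le_cone n b hi hw i' (Finset.mem_range.mp hi')
    have := le_antisymm h1 h2
    rw [this]; rfl
  · intro j hj
    apply le_antisymm
    · rcases lt_or_eq_of_le hj with h | h
      · calc psiFn n b hn (1, (j:ℝ)) ≤ Lfn n b j (1, (j:ℝ)) :=
              Finset.inf'_le _ (Finset.mem_range.mpr h)
          _ = -(acoef n b j : ℝ) := by unfold Lfn Afn; simp; ring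
      · calc psiFn n b hn (1, (j:ℝ)) ≤ Lfn n b (j-1) (1, (j:ℝ)) :=
              Finset.inf'_le _ (Finset.mem_range.mpr (by omega))
          _ = -(acoef n b j : ℝ) := by
              unfold Lfn Sfn Afn
              have : j - 1 + 1 = j := by omega
              rw [this]
              have hc : ((j-1 : ℕ) : ℝ) = (j : ℝ) - 1 := by
                have h1 : (1:ℕ) ≤ j := by omega
                push_cast [h1]; ring
              rw [hc]; simp; ring
    · apply Finset.le_inf'
      intro i hi
      rw [Finset.mem_range] at hi
      have ht : Afn n b i + ((j : ℝ) - i) * Sfn n b i ≤ Afn n b j :=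
        tangentR n b (by omega) hj
      unfold Lfn
      unfold Afn at ht ⊢
      simp only
      nlinarith [ht]
  · constructor
    · intro x hx y hy a c ha hc hac
      simp only [Set.mem_setOf_eq] at hx hy ⊢
      constructor
      · have : (a • x + c • y).2 = a * x.2 + c * y.2 := rfl
        rw [this]; nlinarith [hx.1, hy.1]
      · have h2 : (a • x + c • y).2 = a * x.2 + c * y.2 := rfl
        have h1 : (a • x + c • y).1 = a * x.1 + c * y.1 := rfl
        rw [h1, h2]; nlinarith [hx.2, hy.2]
    · intro x _ y _ a c ha hc hac
      obtain ⟨i0, hi0, hEq⟩ := Finset.exists_mem_eq_inf' (s := Finset.range n)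
        (by simp; omega) (fun i => Lfn n b i (a • x + c • y))
      have hL : ∀ z w : ℝ × ℝ, ∀ p q : ℝ, Lfn n b i0 (p • z + q • w)
          = p * Lfn n b i0 z + q * Lfn n b i0 w := by
        intro z w p q
        unfold Lfn
        have h1 : (p • z + q • w).1 = p * z.1 + q * w.1 := rfl
        have h2 : (p • z + q • w).2 = p * z.2 + q * w.2 := rfl
        rw [h1, h2]; ring
      have hx' : psiFn n b hn x ≤ Lfn n b i0 x := Finset.inf'_le _ hi0
      have hy' : psiFn n b hn y ≤ Lfn n b i0 y := Finset.inf'_le _ hi0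
      have : psiFn n b hn (a • x + c • y) = Lfn n b i0 (a • x + c • y) := hEq
      rw [this, hL]
      simp only [smul_eq_mul]
      have := mul_le_mul_of_nonneg_left hx' ha
      have := mul_le_mul_of_nonneg_left hy' hc
      linarith

end PartOne

open Classical in
noncomputable def fseq (n : ℕ) (b : ℕ → ℕ) (h : ℕ → ℕ → ℕ → ((ℤ × ℤ) →₀ ℂ)) :
    ℕ → ((ℤ × ℤ) →₀ ℂ)
  | 0 => 0
  | (c+1) => fseq n b h c - Finsupp.filter (fun u => u ∉ Epair n b c (c+1)) (h 1 c (c+1))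

lemma part4 (n : ℕ) (hn : 1 ≤ n) (b : ℕ → ℕ) :
    ∀ h : ℕ → ℕ → ℕ → ((ℤ × ℤ) →₀ ℂ),
        (∀ c c' c'', h c c' c'' = - h c' c c'' ∧ h c c' c'' = - h c c'' c') →
        (∀ c c' c'' c''', 1 ≤ c → c ≤ n → 1 ≤ c' → c' ≤ n → 1 ≤ c'' → c'' ≤ n →
          1 ≤ c''' → c''' ≤ n →
          h c' c'' c''' - h c c'' c''' + h c c' c''' - h c c' c'' = 0) →
        ∃ g : ℕ → ℕ → ((ℤ × ℤ) →₀ ℂ),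
          (∀ c c', 1 ≤ c → c ≤ n → 1 ≤ c' → c' ≤ n →
            g c c' ∈ Finsupp.supported ℂ ℂ (Epair n b c c')) ∧
          (∀ c c', g c c' = - g c' c) ∧
          (∀ c c' c'', 1 ≤ c → c ≤ n → 1 ≤ c' → c' ≤ n → 1 ≤ c'' → c'' ≤ n →
            h c c' c'' = g c' c'' - g c c'' + g c c') := by
  classical
  intro h hanti hcoc
  set fs := fseq n b h with hfs
  have hADJ : ∀ c : ℕ, h 1 c (c+1) + fs (c+1) - fs c
      ∈ Finsupp.supported ℂ ℂ (Epair n b c (c+1)) := by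
    intro c
    have hfsucc : fs (c+1) = fs c - Finsupp.filter (fun u => u ∉ Epair n b c (c+1)) (h 1 c (c+1)) := by
      rw [hfs]; rfl
    have hkey : h 1 c (c+1) + fs (c+1) - fs c
        = Finsupp.filter (fun u => u ∈ Epair n b c (c+1)) (h 1 c (c+1)) := by
      have := Finsupp.filter_pos_add_filter_neg (h 1 c (c+1)) (fun u => u ∈ Epair n b c (c+1))
      rw [hfsucc, eq_sub_of_add_eq this]
      abel
    rw [hkey, Finsupp.mem_supported]
    intro u hu
    rw [Finsupp.support_filter, Finset.mem_coe, Finset.mem_filter] at hu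
    exact hu.2
  have hanti2 : ∀ c c' : ℕ, h 1 c c' + fs c' - fs c = -(h 1 c' c + fs c - fs c') := by
    intro c c'
    rw [(hanti 1 c c').2]
    abel
  refine ⟨fun c c' => h 1 c c' + fs c' - fs c, ?_, ?_, ?_⟩
  · intro c c' hc1 hcn hc1' hcn'
    rcases eq_or_ne c' (c+1) with rfl | hadj
    · exact hADJ c
    · rcases eq_or_ne c (c'+1) with rfl | hadj'
      · have hEp : Epair n b (c'+1) c' = Epair n b c' (c'+1) := by
          unfold Epair
          rw [if_neg (by omega), if_pos rfl, if_pos rfl]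
        show h 1 (c'+1) c' + fs c' - fs (c'+1) ∈ _
        rw [hEp, hanti2]
        exact Submodule.neg_mem _ (hADJ c')
      · have : Epair n b c c' = Set.univ := by
          unfold Epair; rw [if_neg hadj, if_neg hadj']
        rw [this, Finsupp.mem_supported]
        simp
  · intro c c'
    exact hanti2 c c'
  · intro c c' c'' hc1 hcn hc1' hcn' hc1'' hcn''
    have hc := hcoc 1 c c' c'' (le_refl 1) hn hc1 hcn hc1' hcn' hc1'' hcn''
    have key : h c c' c'' = h 1 c' c'' - h 1 c c'' + h 1 c c' :=
      eq_of_sub_eq_zero (by rw [← hc]; abel)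
    rw [key]; ext u; simp only [Finsupp.add_apply, Finsupp.sub_apply]; ring
lemma convneg {F : ℕ → ℤ} {n j0 d j1 : ℕ}
    (hs : ∀ k l, k ≤ l → l + 1 ≤ n → F (k+1) - F k ≤ F (l+1) - F l)
    (h0 : j0 ≤ d) (h1 : d ≤ j1) (hjn : j1 ≤ n) (hF0 : F j0 < 0) (hF1 : F j1 < 0) :
    F d < 0 := by
  rcases eq_or_lt_of_le h1 with rfl | hd1
  · exact hF1
  rcases le_or_gt 0 (F (d+1) - F d) with hstep | hstep
  · have := seq_ge (F := F) (c := 0) (d := d) j1 h1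
      (fun k hk hk' => le_trans hstep (hs d k hk (by omega)))
    simp at this
    linarith
  · have := seq_le (F := F) (c := 0) (d := j0) d h0
      (fun k hk hk' => le_trans (hs k d (by omega) (by omega)) hstep.le)
    simp at this
    linarith

lemma part3 (n : ℕ) (hn : 1 ≤ n) (b : ℕ → ℕ) :
    ∀ g : ℕ → ℕ → ((ℤ × ℤ) →₀ ℂ),
        (∀ c c', 1 ≤ c → c ≤ n → 1 ≤ c' → c' ≤ n →
          g c c' ∈ Finsupp.supported ℂ ℂ (Epair n b c c')) →
        (∀ c c', g c c' = - g c' c) →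
        (∀ c c' c'', 1 ≤ c → c ≤ n → 1 ≤ c' → c' ≤ n → 1 ≤ c'' → c'' ≤ n →
          g c c'' = g c c' + g c' c'') →
        ∃ f : ℕ → ((ℤ × ℤ) →₀ ℂ),
          (∀ c, 1 ≤ c → c ≤ n → f c ∈ Finsupp.supported ℂ ℂ (Esec n b c)) ∧
          (∀ c c', 1 ≤ c → c ≤ n → 1 ≤ c' → c' ≤ n → g c c' = f c' - f c) := by
  classical
  intro g hsupp hanti hcoc
  -- the linear functional at a lattice point u
  set F : (ℤ × ℤ) → ℕ → ℤ := fun u j => u.1 + (j : ℤ) * u.2 + acoef n b j with hF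
  have hFconv : ∀ u : ℤ × ℤ, ∀ k l, k ≤ l → l + 1 ≤ n →
      F u (k+1) - F u k ≤ F u (l+1) - F u l := by
    intro u k l hkl hl
    have := sco_mono b hkl hl
    simp only [hF]
    push_cast
    linarith
  -- failing Esec gives a negative value at c-1 or c
  have hbad : ∀ u : ℤ × ℤ, ∀ c, 1 ≤ c → u ∉ Esec n b c →
      F u (c-1) < 0 ∨ F u c < 0 := by
    intro u c hc hu
    unfold Esec at hu
    rw [Set.mem_setOf_eq, not_and_or] at hu
    have hcast : ((c : ℤ) - 1) = ((c - 1 : ℕ) : ℤ) := by omega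
    rcases hu with hu | hu
    · left; rw [hcast] at hu; simp only [hF]; omega
    · right; simp only [hF]; omega
  -- chain equality : both charts bad ⇒ same value of g 1 · at u (for c ≤ c')
  have hchain : ∀ u : ℤ × ℤ, ∀ c c', c ≤ c' → 1 ≤ c → c ≤ n → 1 ≤ c' → c' ≤ n →
      u ∉ Esec n b c → u ∉ Esec n b c' → g 1 c u = g 1 c' u := by
    intro u c c' hcc' hc1 hcn hc1' hcn' hu hu'
    have hneg : ∀ d, c ≤ d → d + 1 ≤ c' → F u d < 0 := by
      intro d hd hd'
      rcases hbad u c hc1 hu with h0 | h0 <;> rcases hbad u c' hc1' hu' with h1 | h1 <;>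
        exact convneg (hs := hFconv u) (by omega) (by omega) (by omega) h0 h1
    have key : ∀ e, c ≤ e → e ≤ c' → g 1 c u = g 1 e u := by
      intro e he
      induction e, he using Nat.le_induction with
      | base => intro _; rfl
      | succ e he ih =>
        intro he'
        have hcoce := hcoc 1 e (e+1) (le_refl 1) hn (by omega) (by omega) (by omega) (by omega)
        have happ : g 1 (e+1) u = g 1 e u + g e (e+1) u := by
          rw [hcoce]; simp
        have hzero : g e (e+1) u = 0 := by
          have hmem := hsupp e (e+1) (by omega) (by omega) (by omega) (by omega)
          rw [Finsupp.mem_supported'] at hmem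
          apply hmem
          unfold Epair
          rw [if_pos rfl]
          rw [Set.mem_setOf_eq, not_le]
          have := hneg e he (by omega)
          simp only [hF] at this
          omega
        rw [happ, hzero, add_zero, ← ih (by omega)]
    exact key c' hcc' le_rfl
  have hconst : ∀ u : ℤ × ℤ, ∀ c c', 1 ≤ c → c ≤ n → 1 ≤ c' → c' ≤ n →
      u ∉ Esec n b c → u ∉ Esec n b c' → g 1 c u = g 1 c' u := by
    intro u c c' hc1 hcn hc1' hcn' hu hu'
    rcases le_or_gt c c' with h | h
    · exact hchain u c c' h hc1 hcn hc1' hcn' hu hu'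
    · exact (hchain u c' c h.le hc1' hcn' hc1 hcn hu' hu).symm
  -- the correction constant K
  set P : (ℤ × ℤ) → ℕ → Prop := fun u c => 1 ≤ c ∧ c ≤ n ∧ u ∉ Esec n b c with hP
  set bigS : Finset (ℤ × ℤ) := (Finset.range (n+1)).biUnion (fun c => (g 1 c).support)
    with hbigS
  have hKsupp : ∀ u : ℤ × ℤ,
      (if hu : ∃ c, P u c then g 1 (Nat.find hu) u else 0) ≠ 0 → u ∈ bigS := by
    intro u hne
    rw [hbigS]
    by_cases hu : ∃ c, P u c
    · rw [dif_pos hu] at hne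
      have hspec := Nat.find_spec hu
      refine Finset.mem_biUnion.mpr ⟨Nat.find hu, ?_, ?_⟩
      · rw [Finset.mem_range]; omega
      · rw [Finsupp.mem_support_iff]; exact hne
    · rw [dif_neg hu] at hne; exact absurd rfl hne
  set K : (ℤ × ℤ) →₀ ℂ := Finsupp.onFinset bigS
    (fun u => if hu : ∃ c, P u c then g 1 (Nat.find hu) u else 0) hKsupp with hK
  refine ⟨fun c => g 1 c - K, ?_, ?_⟩
  · intro c hc1 hcn
    rw [Finsupp.mem_supported']
    intro u hu
    have hex : ∃ c, P u c := ⟨c, hc1, hcn, hu⟩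
    have hKu : K u = g 1 (Nat.find hex) u := by
      rw [hK, Finsupp.onFinset_apply, dif_pos hex]
    have hspec := Nat.find_spec hex
    have : g 1 c u = g 1 (Nat.find hex) u :=
      hconst u c (Nat.find hex) hc1 hcn hspec.1 hspec.2.1 hu hspec.2.2
    rw [Finsupp.sub_apply, hKu, this, sub_self]
  · intro c c' hc1 hcn hc1' hcn'
    have h1 := hcoc c 1 c' hc1 hcn (le_refl 1) hn hc1' hcn'
    have h2 := hanti c 1
    rw [h1, h2]
    ext u; simp only [Finsupp.add_apply, Finsupp.sub_apply, Finsupp.neg_apply]; ring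


/-- For `b ∈ ℕ^{n-1}`, the divisor `D(b)` on the toric resolution `X` of the `A_{n-1}`
singularity has a convex (= concave in Mathlib's convention, following [F]) support
function `ψ_{D(b)}`, i.e. a function that is linear on each maximal cone of the fan and
takes value `−a_j` at each ray generator `v_j = (1,j)`; consequently `O(D(b))` is
generated by its global sections (every local section over a chart is a global section
times a regular function on the chart), and `H^i(X, O(D(b))) = 0` for `i > 0` — on the
surface `X`, Čech `H^1` and `H^2` for the affine cover `{X_c}_{c=1}^n` vanish. -/
theorem statement11 (n : ℕ) (hn : 1 ≤ n) (b : ℕ → ℕ) :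
    -- (i) existence of a convex support function
    (∃ ψ : ℝ × ℝ → ℝ,
      (∀ i : ℕ, i < n → ∃ u : ℝ × ℝ, ∀ w ∈ fanCone i, ψ w = u.1 * w.1 + u.2 * w.2) ∧
      (∀ j : ℕ, j ≤ n → ψ (1, (j : ℝ)) = -(acoef n b j : ℝ)) ∧
      ConcaveOn ℝ {w : ℝ × ℝ | 0 ≤ w.2 ∧ w.2 ≤ (n : ℝ) * w.1} ψ)
    -- (ii) O(D(b)) is generated by global sections
    ∧ (∀ c : ℕ, 1 ≤ c → c ≤ n → ∀ u ∈ Esec n b c,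
        ∃ g w : ℤ × ℤ,
          (∀ j : ℕ, j ≤ n → 0 ≤ g.1 + (j : ℤ) * g.2 + acoef n b j) ∧
          (0 ≤ w.1 + ((c : ℤ) - 1) * w.2 ∧ 0 ≤ w.1 + (c : ℤ) * w.2) ∧
          u = g + w)
    -- (iii) vanishing of H^1 (Čech, for the affine cover by the charts X_c)
    ∧ (∀ g : ℕ → ℕ → ((ℤ × ℤ) →₀ ℂ),
        (∀ c c', 1 ≤ c → c ≤ n → 1 ≤ c' → c' ≤ n →
          g c c' ∈ Finsupp.supported ℂ ℂ (Epair n b c c')) →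
        (∀ c c', g c c' = - g c' c) →
        (∀ c c' c'', 1 ≤ c → c ≤ n → 1 ≤ c' → c' ≤ n → 1 ≤ c'' → c'' ≤ n →
          g c c'' = g c c' + g c' c'') →
        ∃ f : ℕ → ((ℤ × ℤ) →₀ ℂ),
          (∀ c, 1 ≤ c → c ≤ n → f c ∈ Finsupp.supported ℂ ℂ (Esec n b c)) ∧
          (∀ c c', 1 ≤ c → c ≤ n → 1 ≤ c' → c' ≤ n → g c c' = f c' - f c))
    -- (iii') vanishing of H^2 (Čech; sections over triple intersections are the full
    -- Laurent algebra, since triple intersections of the cones are {0})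
    ∧ (∀ h : ℕ → ℕ → ℕ → ((ℤ × ℤ) →₀ ℂ),
        (∀ c c' c'', h c c' c'' = - h c' c c'' ∧ h c c' c'' = - h c c'' c') →
        (∀ c c' c'' c''', 1 ≤ c → c ≤ n → 1 ≤ c' → c' ≤ n → 1 ≤ c'' → c'' ≤ n →
          1 ≤ c''' → c''' ≤ n →
          h c' c'' c''' - h c c'' c''' + h c c' c''' - h c c' c'' = 0) →
        ∃ g : ℕ → ℕ → ((ℤ × ℤ) →₀ ℂ),
          (∀ c c', 1 ≤ c → c ≤ n → 1 ≤ c' → c' ≤ n →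
            g c c' ∈ Finsupp.supported ℂ ℂ (Epair n b c c')) ∧
          (∀ c c', g c c' = - g c' c) ∧
          (∀ c c' c'', 1 ≤ c → c ≤ n → 1 ≤ c' → c' ≤ n → 1 ≤ c'' → c'' ≤ n →
            h c c' c'' = g c' c'' - g c c'' + g c c')) := by
  exact ⟨part1 n b hn, part2 n hn b, part3 n hn b, part4 n hn b⟩
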